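/- Let G be a connected signed graph with Gremban expansion 𝒢, and define the symmetric edge connectivity κ_e^sym(𝒢) as the minimum size of a Gremban-symmetric cut-set of 𝒢. Then κ_e^sym(𝒢) = 2·min{κ_e(G), φ(G)}, where κ_e(G) is the edge connectivity and φ(G) the frustration index of G. -/

import Mathlib

/-- A signed graph: a simple graph together with a symmetric `±1`-valued sign function
on its edges. -/
structure SignedGraph (V : Type*) where
  G : SimpleGraph V
  sign : V → V → ℤ
  sign_symm : ∀ u v, sign u v = sign v u
  sign_pm : ∀ u v, G.Adj u v → sign u v = 1 ∨ sign u v = -1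

namespace SignedGraph

variable {V : Type*} (S : SignedGraph V)

/-- The Gremban expansion of a signed graph: each vertex `v` is doubled into the two
polarities `(v, true)` (positive) and `(v, false)` (negative); a positive edge lifts to
two edges between equal polarities, and a negative edge to two edges between opposite
polarities. -/
def gremban : SimpleGraph (V × Bool) where
  Adj x y := S.G.Adj x.1 y.1 ∧ ((x.2 = y.2) ↔ S.sign x.1 y.1 = 1)
  symm := by
    constructor
    rintro ⟨u, a⟩ ⟨v, b⟩ ⟨h, hs⟩
    refine ⟨h.symm, ?_⟩
    rw [S.sign_symm v u, eq_comm]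
    exact hs
  loopless := by
    constructor
    rintro ⟨u, a⟩ ⟨h, _⟩
    exact S.G.loopless.irrefl u h

/-- The Gremban involution, swapping the two polarities of every vertex. -/
def eta : V × Bool → V × Bool := fun x => (x.1, !x.2)

end SignedGraph

open SignedGraph

/-- The set of edges of `G` with one endpoint in `A` and the other in `B`. -/
def cutEdges {V : Type*} (G : SimpleGraph V) (A B : Set V) : Set (Sym2 V) :=
  {e | e ∈ G.edgeSet ∧ ∃ u v, e = s(u, v) ∧ u ∈ A ∧ v ∈ B}

/-- The edge connectivity of a graph: the minimum size of a cut-set over all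
bipartitions of the vertex set into two nonempty parts. -/
noncomputable def edgeConn {V : Type*} (G : SimpleGraph V) : ℕ :=
  sInf {n | ∃ A : Set V, A.Nonempty ∧ Aᶜ.Nonempty ∧ (cutEdges G A Aᶜ).ncard = n}

/-- The frustration set of a switching function `θ`: the edges that are negative after
switching by `θ`. -/
def frustEdges {V : Type*} (S : SignedGraph V) (θ : V → ℤ) : Set (Sym2 V) :=
  {e | e ∈ S.G.edgeSet ∧ ∃ u v, e = s(u, v) ∧ θ u * θ v * S.sign u v = -1}

/-- The frustration index of a signed graph: the minimum size of a frustration set over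
all switching functions `θ : V → {±1}`. -/
noncomputable def frustIndex {V : Type*} (S : SignedGraph V) : ℕ :=
  sInf {n | ∃ θ : V → ℤ, (∀ v, θ v = 1 ∨ θ v = -1) ∧ (frustEdges S θ).ncard = n}

/-- A Gremban-symmetric bipartition of the vertex set of the Gremban expansion: two
nonempty, disjoint, covering parts, each mapped onto a part by the Gremban involution. -/
def GrembanSymPartition {V : Type*} (U₁ U₂ : Set (V × Bool)) : Prop :=
  U₁.Nonempty ∧ U₂.Nonempty ∧ Disjoint U₁ U₂ ∧ U₁ ∪ U₂ = Set.univ ∧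
    ((eta '' U₁ = U₁ ∧ eta '' U₂ = U₂) ∨ (eta '' U₁ = U₂ ∧ eta '' U₂ = U₁))

/-- `F` is a cut-set of the signed graph `G`: the set of edges between the two parts of
some bipartition of `V(G)` into nonempty parts. -/
def IsCutSet {V : Type*} (S : SignedGraph V) (F : Set (Sym2 V)) : Prop :=
  ∃ A : Set V, A.Nonempty ∧ Aᶜ.Nonempty ∧ F = cutEdges S.G A Aᶜ

/-- `F` is a frustration set of the signed graph `G`: the set of edges that become
negative after some switching. -/
def IsFrustSet {V : Type*} (S : SignedGraph V) (F : Set (Sym2 V)) : Prop :=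
  ∃ θ : V → ℤ, (∀ v, θ v = 1 ∨ θ v = -1) ∧ F = frustEdges S θ

/-- The collection of Gremban-symmetric cut-sets of the Gremban expansion, i.e. cut-sets
of Gremban-symmetric bipartitions. -/
def symCutSets {V : Type*} (S : SignedGraph V) : Set (Set (Sym2 (V × Bool))) :=
  {C | ∃ U₁ U₂ : Set (V × Bool), GrembanSymPartition U₁ U₂ ∧
    C = cutEdges S.gremban U₁ U₂}


/-- The symmetric edge connectivity of the Gremban expansion: the minimum size of a
Gremban-symmetric cut-set. -/
noncomputable def symEdgeConn {V : Type*} (S : SignedGraph V) : ℕ :=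
  sInf {n | ∃ C ∈ symCutSets S, C.ncard = n}


section Aux

open SignedGraph

variable {V : Type*}

lemma bool_not_eq (b c : Bool) (h : ¬ b = c) : (!b) = c := by
  cases b <;> cases c <;> simp_all

lemma gremban_adj {S : SignedGraph V} {x y : V × Bool} :
    S.gremban.Adj x y ↔ S.G.Adj x.1 y.1 ∧ ((x.2 = y.2) ↔ S.sign x.1 y.1 = 1) := Iff.rfl

lemma eta_eta (x : V × Bool) : eta (eta x) = x := by cases x; simp [eta]

lemma eta_invol : Function.Involutive (eta : V × Bool → V × Bool) := eta_eta

lemma eta_bij : Function.Bijective (eta : V × Bool → V × Bool) := eta_invol.bijective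

lemma mem_iff_eta_mem {U : Set (V × Bool)} (h : eta '' U = U) (x : V × Bool) :
    eta x ∈ U ↔ x ∈ U := by
  constructor
  · intro hx
    rw [← h] at hx
    obtain ⟨z, hz, hzx⟩ := hx
    exact (eta_invol.injective hzx) ▸ hz
  · intro hx
    rw [← h]; exact ⟨x, hx, rfl⟩

lemma eta_mem_compl {U : Set (V × Bool)} (h : eta '' U = Uᶜ) (x : V × Bool) :
    eta x ∈ Uᶜ ↔ x ∈ U := by
  constructor
  · intro hx
    rw [← h] at hx
    obtain ⟨z, hz, hzx⟩ := hx
    exact (eta_invol.injective hzx) ▸ hz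
  · intro hx
    rw [← h]; exact ⟨x, hx, rfl⟩

lemma eta_mem_of_compl {U : Set (V × Bool)} (h : eta '' U = Uᶜ) (x : V × Bool) :
    eta x ∈ U ↔ x ∈ Uᶜ := by
  have h2 := eta_mem_compl h x
  constructor
  · intro hx hxU
    exact (h2.2 hxU) hx
  · intro hx
    by_contra hc
    exact hx (h2.1 hc)

/-- Master counting lemma: a symmetric cut in the Gremban expansion has twice the
cardinality of its projection to the base graph. -/
lemma cut_ncard_two_mul [Fintype V] (S : SignedGraph V) (U : Set (V × Bool))
    (hU : eta '' U = U ∨ eta '' U = Uᶜ) :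
    (cutEdges S.gremban U Uᶜ).ncard
      = 2 * (Sym2.map Prod.fst '' cutEdges S.gremban U Uᶜ).ncard := by
  classical
  set C := cutEdges S.gremban U Uᶜ with hCdef
  set F := Sym2.map Prod.fst '' C with hFdef
  have hCfin : C.Finite := Set.toFinite _
  have hFfin : F.Finite := Set.toFinite _
  -- eta maps C to itself
  have hetaC : ∀ e ∈ C, Sym2.map eta e ∈ C := by
    rintro e ⟨he, z, w, rfl, hz, hw⟩
    rw [SimpleGraph.mem_edgeSet] at he
    have hadj := gremban_adj.mp he
    have hadj' : S.gremban.Adj (eta z) (eta w) :=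
      gremban_adj.mpr ⟨hadj.1, by simpa [eta] using hadj.2⟩
    rw [Sym2.map_pair_eq]
    rcases hU with h | h
    · exact ⟨(SimpleGraph.mem_edgeSet _).2 hadj', eta z, eta w, rfl,
        (mem_iff_eta_mem h z).2 hz, fun hc => hw ((mem_iff_eta_mem h w).1 hc)⟩
    · refine ⟨(SimpleGraph.mem_edgeSet _).2 hadj', eta w, eta z, Sym2.eq_swap, ?_, ?_⟩
      · exact (eta_mem_of_compl h w).2 hw
      · exact (eta_mem_compl h z).2 hz
  -- fibers of the projection have exactly two elements
  have fiber : ∀ e ∈ F, ∃ l₁ l₂ : Sym2 (V × Bool), l₁ ≠ l₂ ∧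
      {e' | e' ∈ C ∧ Sym2.map Prod.fst e' = e} = {l₁, l₂} := by
    rintro e ⟨e₀, he₀, rfl⟩
    obtain ⟨he, x, y, heq, hx, hy⟩ := he₀
    subst heq
    obtain ⟨u, a⟩ := x
    obtain ⟨v, b⟩ := y
    rw [SimpleGraph.mem_edgeSet] at he
    have hadj := gremban_adj.mp he
    dsimp only at hadj
    have huv : u ≠ v := hadj.1.ne
    have hmem1 : s((u, a), (v, b)) ∈ C :=
      ⟨(SimpleGraph.mem_edgeSet _).2 he, (u, a), (v, b), rfl, hx, hy⟩
    have hmem2 : s((u, !a), (v, !b)) ∈ C := by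
      have := hetaC _ hmem1
      rwa [Sym2.map_pair_eq] at this
    refine ⟨s((u, a), (v, b)), s((u, !a), (v, !b)), ?_, ?_⟩
    · intro hcontra
      rw [Sym2.eq_iff] at hcontra
      simp [Prod.ext_iff, huv] at hcontra
    · ext e'
      simp only [Set.mem_setOf_eq, Set.mem_insert_iff, Set.mem_singleton_iff]
      constructor
      · rintro ⟨hc, hproj⟩
        obtain ⟨he', z, w, heq', hz, hw⟩ := hc
        subst heq'
        obtain ⟨p, c⟩ := z
        obtain ⟨q, d⟩ := w
        rw [SimpleGraph.mem_edgeSet] at he'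
        have hadj2 := gremban_adj.mp he'
        dsimp only at hadj2
        rw [Sym2.map_pair_eq, Sym2.map_pair_eq, Sym2.eq_iff] at hproj
        dsimp only at hproj
        have h2 : (a = b) ↔ S.sign u v = 1 := hadj.2
        have h1 : (c = d) ↔ S.sign p q = 1 := hadj2.2
        rcases hproj with ⟨hp, hq⟩ | ⟨hp, hq⟩
        · rw [hp, hq] at h1
          have hcd : (c = d) ↔ (a = b) := h1.trans h2.symm
          have hor : (c = a ∧ d = b) ∨ (c = !a ∧ d = !b) := by
            cases a <;> cases b <;> cases c <;> cases d <;> simp_all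
          rcases hor with ⟨rfl, rfl⟩ | ⟨rfl, rfl⟩
          · left; rw [hp, hq]
          · right; rw [hp, hq]
        · rw [hp, hq, S.sign_symm] at h1
          have hcd : (c = d) ↔ (a = b) := h1.trans h2.symm
          have hor : (d = a ∧ c = b) ∨ (d = !a ∧ c = !b) := by
            cases a <;> cases b <;> cases c <;> cases d <;> simp_all
          rcases hor with ⟨rfl, rfl⟩ | ⟨rfl, rfl⟩
          · left; rw [hp, hq]; exact Sym2.eq_swap
          · right; rw [hp, hq]; exact Sym2.eq_swap
      · rintro (rfl | rfl)
        · exact ⟨hmem1, rfl⟩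
        · exact ⟨hmem2, by rw [Sym2.map_pair_eq, Sym2.map_pair_eq]⟩
  -- counting
  rw [Set.ncard_eq_toFinset_card _ hCfin, Set.ncard_eq_toFinset_card _ hFfin]
  have hmaps : ∀ e' ∈ hCfin.toFinset, Sym2.map Prod.fst e' ∈ hFfin.toFinset := by
    intro e' he'
    rw [Set.Finite.mem_toFinset] at he' ⊢
    exact ⟨e', he', rfl⟩
  rw [Finset.card_eq_sum_card_fiberwise hmaps]
  have hterm : ∀ e ∈ hFfin.toFinset,
      (hCfin.toFinset.filter (fun e' => Sym2.map Prod.fst e' = e)).card = 2 := by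
    intro e hee
    rw [Set.Finite.mem_toFinset] at hee
    obtain ⟨l₁, l₂, hne, hsetEq⟩ := fiber e hee
    have : hCfin.toFinset.filter (fun e' => Sym2.map Prod.fst e' = e) = {l₁, l₂} := by
      ext e'
      rw [Finset.mem_filter, Set.Finite.mem_toFinset, Finset.mem_insert, Finset.mem_singleton]
      have := Set.ext_iff.mp hsetEq e'
      simpa using this
    rw [this]
    exact Finset.card_pair hne
  rw [Finset.sum_congr rfl hterm, Finset.sum_const, smul_eq_mul, Nat.mul_comm]

/-- In the polarity-invariant case, the projection of the symmetric cut is a cut-set of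
the base graph. -/
lemma image_cut_prod (S : SignedGraph V) (A : Set V) :
    Sym2.map Prod.fst '' cutEdges S.gremban (A ×ˢ (Set.univ : Set Bool)) (A ×ˢ (Set.univ : Set Bool))ᶜ
      = cutEdges S.G A Aᶜ := by
  ext e
  constructor
  · rintro ⟨e₀, ⟨he, x, y, heq, hx, hy⟩, rfl⟩
    subst heq
    rw [SimpleGraph.mem_edgeSet] at he
    have hadj := gremban_adj.mp he
    refine ⟨(SimpleGraph.mem_edgeSet _).2 hadj.1, x.1, y.1, by rw [Sym2.map_pair_eq], hx.1, ?_⟩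
    intro hmem
    exact hy ⟨hmem, trivial⟩
  · rintro ⟨he, u, v, rfl, hu, hv⟩
    rw [SimpleGraph.mem_edgeSet] at he
    refine ⟨s((u, true), (v, decide (S.sign u v = 1))), ⟨?_, (u, true), (v, decide (S.sign u v = 1)), rfl, ⟨hu, trivial⟩, ?_⟩, by rw [Sym2.map_pair_eq]⟩
    · rw [SimpleGraph.mem_edgeSet]
      exact gremban_adj.2 ⟨he, by simp [eq_comm]⟩
    · intro hmem
      exact hv hmem.1

/-- In the polarity-swapping case, the projection of the symmetric cut is a frustration
set of the base graph. -/
lemma image_cut_theta (S : SignedGraph V) (g : V → Bool) :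
    Sym2.map Prod.fst '' cutEdges S.gremban {x : V × Bool | x.2 = g x.1} {x : V × Bool | x.2 = g x.1}ᶜ
      = frustEdges S (fun v => if g v then 1 else -1) := by
  ext e
  constructor
  · rintro ⟨e₀, ⟨he, x, y, heq, hx, hy⟩, rfl⟩
    subst heq
    obtain ⟨u, a⟩ := x
    obtain ⟨v, b⟩ := y
    rw [SimpleGraph.mem_edgeSet] at he
    have hadj := gremban_adj.mp he
    dsimp only at hadj
    have hsgn := S.sign_pm u v hadj.1
    refine ⟨(SimpleGraph.mem_edgeSet _).2 hadj.1, u, v, by rw [Sym2.map_pair_eq], ?_⟩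
    have h2 := hadj.2
    simp only [Set.mem_setOf_eq, Set.mem_compl_iff] at hx hy
    rcases hsgn with hs | hs <;> rw [hs] at h2 ⊢ <;>
      cases hgu : g u <;> cases hgv : g v <;> simp_all
  · rintro ⟨he, u, v, rfl, hfr⟩
    rw [SimpleGraph.mem_edgeSet] at he
    have hsgn := S.sign_pm u v he
    rcases hsgn with hs | hs
    · have hne : g u ≠ g v := by
        rw [hs] at hfr
        cases hgu : g u <;> cases hgv : g v <;> simp_all
      refine ⟨s((u, g u), (v, g u)),
        ⟨(SimpleGraph.mem_edgeSet _).2 (gremban_adj.2 ⟨he, by simp [hs]⟩),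
          (u, g u), (v, g u), rfl, rfl, ?_⟩, by rw [Sym2.map_pair_eq]⟩
      simp only [Set.mem_compl_iff, Set.mem_setOf_eq]
      exact hne
    · have heq : g u = g v := by
        rw [hs] at hfr
        cases hgu : g u <;> cases hgv : g v <;> simp_all
      refine ⟨s((u, g u), (v, !g u)),
        ⟨(SimpleGraph.mem_edgeSet _).2 (gremban_adj.2 ⟨he, by simp [hs]⟩),
          (u, g u), (v, !g u), rfl, rfl, ?_⟩, by rw [Sym2.map_pair_eq]⟩
      simp only [Set.mem_compl_iff, Set.mem_setOf_eq]
      rw [← heq]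
      simp

end Aux

/-- For a connected signed graph `G`, the symmetric edge connectivity of its Gremban
expansion equals twice the minimum of the edge connectivity and the frustration index
of `G`. -/
theorem symEdgeConn_eq {V : Type*} [Fintype V] (S : SignedGraph V)
    (hconn : S.G.Connected) :
    symEdgeConn S = 2 * min (edgeConn S.G) (frustIndex S) := by
  classical
  obtain ⟨v₀⟩ : Nonempty V := hconn.nonempty
  set Tc : Set ℕ := {n | ∃ A : Set V, A.Nonempty ∧ Aᶜ.Nonempty ∧ (cutEdges S.G A Aᶜ).ncard = n}
    with hTc
  set Tf : Set ℕ := {n | ∃ θ : V → ℤ, (∀ v, θ v = 1 ∨ θ v = -1) ∧ (frustEdges S θ).ncard = n}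
    with hTf
  have hTfne : Tf.Nonempty :=
    ⟨(frustEdges S (fun _ => 1)).ncard, fun _ => 1, fun _ => Or.inl rfl, rfl⟩
  have h1 : edgeConn S.G = sInf Tc := rfl
  have h2 : frustIndex S = sInf Tf := rfl
  -- the set of sizes of symmetric cuts is exactly twice the sizes of cuts/frustration sets
  have hset : {n | ∃ C ∈ symCutSets S, C.ncard = n} = (fun m => 2 * m) '' (Tc ∪ Tf) := by
    ext n
    simp only [Set.mem_setOf_eq, Set.mem_image, Set.mem_union]
    constructor
    · rintro ⟨C, ⟨U₁, U₂, ⟨hne₁, hne₂, hdis, huniv, hsym⟩, rfl⟩, rfl⟩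
      have hU₂ : U₂ = U₁ᶜ := by
        ext x
        constructor
        · intro hx2 hx1
          exact (Set.disjoint_left.mp hdis) hx1 hx2
        · intro hx1
          have hxu : x ∈ U₁ ∪ U₂ := huniv ▸ Set.mem_univ x
          exact hxu.resolve_left hx1
      subst hU₂
      rcases hsym with ⟨hs1, _⟩ | ⟨hs1, _⟩
      · -- invariant case: U₁ is a product
        set A : Set V := {v | (v, true) ∈ U₁} with hA
        have hU₁ : U₁ = A ×ˢ (Set.univ : Set Bool) := by
          ext ⟨v, b⟩
          simp only [Set.mem_prod, Set.mem_univ, and_true, hA, Set.mem_setOf_eq]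
          cases b
          · exact mem_iff_eta_mem hs1 (v, true)
          · exact Iff.rfl
        have hAne : A.Nonempty := by
          obtain ⟨⟨v, b⟩, hv⟩ := hne₁
          rw [hU₁] at hv
          exact ⟨v, hv.1⟩
        have hAcne : Aᶜ.Nonempty := by
          obtain ⟨⟨v, b⟩, hv⟩ := hne₂
          rw [hU₁] at hv
          exact ⟨v, fun hvA => hv ⟨hvA, trivial⟩⟩
        refine ⟨(cutEdges S.G A Aᶜ).ncard, Or.inl ⟨A, hAne, hAcne, rfl⟩, ?_⟩
        rw [cut_ncard_two_mul S U₁ (Or.inl hs1), hU₁, image_cut_prod]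
      · -- swapping case: U₁ is the graph of a switching
        set g : V → Bool := fun v => decide ((v, true) ∈ U₁) with hg
        have hft : ∀ v : V, (v, false) ∈ U₁ ↔ (v, true) ∉ U₁ := by
          intro v
          have h := eta_mem_compl hs1 (v, true)
          simp only [eta, Bool.not_true, Set.mem_compl_iff] at h
          constructor
          · intro hf ht
            exact (h.2 ht) hf
          · intro ht
            by_contra hc
            exact ht (h.1 hc)
        have hU₁e : U₁ = {x : V × Bool | x.2 = g x.1} := by
          ext ⟨v, b⟩
          simp only [Set.mem_setOf_eq, hg]
          cases b
          · rw [hft v]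
            simp [eq_comm]
          · simp [eq_comm]
        refine ⟨(frustEdges S (fun v => if g v then (1 : ℤ) else -1)).ncard,
          Or.inr ⟨fun v => if g v then (1 : ℤ) else -1,
            fun v => by cases h : g v <;> simp [h], rfl⟩, ?_⟩
        rw [cut_ncard_two_mul S U₁ (Or.inr hs1), hU₁e, image_cut_theta]
    · rintro ⟨m, hm, rfl⟩
      rcases hm with ⟨A, hAne, hAcne, rfl⟩ | ⟨θ, hθ, rfl⟩
      · set U₁ : Set (V × Bool) := A ×ˢ (Set.univ : Set Bool) with hU₁
        have hsymU : eta '' U₁ = U₁ := by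
          ext ⟨v, b⟩
          constructor
          · rintro ⟨⟨w, c⟩, hw, heq⟩
            simp only [eta, Prod.mk.injEq] at heq
            obtain ⟨rfl, rfl⟩ := heq
            exact ⟨hw.1, trivial⟩
          · intro hv
            exact ⟨(v, !b), ⟨hv.1, trivial⟩, by simp [eta]⟩
        refine ⟨cutEdges S.gremban U₁ U₁ᶜ, ⟨U₁, U₁ᶜ, ⟨?_, ?_, disjoint_compl_right,
          Set.union_compl_self U₁, Or.inl ⟨hsymU, ?_⟩⟩, rfl⟩, ?_⟩
        · obtain ⟨a, ha⟩ := hAne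
          exact ⟨(a, true), ha, trivial⟩
        · obtain ⟨b, hb⟩ := hAcne
          exact ⟨(b, true), fun h => hb h.1⟩
        · rw [Set.image_compl_eq eta_bij, hsymU]
        · rw [cut_ncard_two_mul S U₁ (Or.inl hsymU), hU₁, image_cut_prod]
      · set g : V → Bool := fun v => decide (θ v = 1) with hg
        have hθeq : θ = fun v => if g v then (1 : ℤ) else -1 := by
          funext v
          rcases hθ v with h | h <;> simp [hg, h]
        set U₁ : Set (V × Bool) := {x : V × Bool | x.2 = g x.1} with hU₁
        have hsymU : eta '' U₁ = U₁ᶜ := by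
          ext ⟨v, b⟩
          constructor
          · rintro ⟨⟨w, c⟩, hw, heq⟩
            simp only [eta, Prod.mk.injEq] at heq
            obtain ⟨rfl, rfl⟩ := heq
            simp only [hU₁, Set.mem_setOf_eq] at hw
            simp [hU₁, hw]
          · intro hv
            refine ⟨(v, !b), ?_, by simp [eta]⟩
            simp only [hU₁, Set.mem_compl_iff, Set.mem_setOf_eq] at hv ⊢
            exact bool_not_eq b (g v) hv
        refine ⟨cutEdges S.gremban U₁ U₁ᶜ, ⟨U₁, U₁ᶜ, ⟨⟨(v₀, g v₀), rfl⟩,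
          ⟨(v₀, !g v₀), by simp [hU₁]⟩, disjoint_compl_right,
          Set.union_compl_self U₁, Or.inr ⟨hsymU, ?_⟩⟩, rfl⟩, ?_⟩
        · rw [Set.image_compl_eq eta_bij, hsymU, compl_compl]
        · rw [cut_ncard_two_mul S U₁ (Or.inr hsymU), hU₁, image_cut_theta, ← hθeq]
  -- sInf arithmetic
  have himg : ∀ T : Set ℕ, sInf ((fun m => 2 * m) '' T) = 2 * sInf T := by
    intro T
    rcases T.eq_empty_or_nonempty with rfl | hT
    · simp [Nat.sInf_empty]
    · apply le_antisymm
      · exact Nat.sInf_le ⟨sInf T, Nat.sInf_mem hT, rfl⟩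
      · obtain ⟨t, ht, hteq⟩ := Nat.sInf_mem (hT.image (fun m => 2 * m))
        rw [← hteq]
        exact Nat.mul_le_mul_left 2 (Nat.sInf_le ht)
  have hgoal : symEdgeConn S = sInf ((fun m => 2 * m) '' (Tc ∪ Tf)) := by
    rw [symEdgeConn, hset]
  rw [hgoal, himg, h1, h2]
  congr 1
  -- sInf of a union equals the min
  rcases Tc.eq_empty_or_nonempty with hTce | hTcne
  · -- degenerate: at most one vertex
    have hsub : ∀ u v : V, u = v := by
      intro u v
      by_contra hne
      have : (cutEdges S.G {u} ({u} : Set V)ᶜ).ncard ∈ Tc :=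
        ⟨{u}, ⟨u, rfl⟩, ⟨v, fun h => hne (Set.mem_singleton_iff.1 h).symm⟩, rfl⟩
      rw [hTce] at this
      exact this
    have hfe : frustEdges S (fun _ => (1 : ℤ)) = ∅ := by
      ext e
      simp only [frustEdges, Set.mem_setOf_eq, Set.mem_empty_iff_false, iff_false, not_and]
      rintro he ⟨u, v, rfl, -⟩
      rw [SimpleGraph.mem_edgeSet] at he
      exact he.ne (hsub u v)
    have h0 : (0 : ℕ) ∈ Tf := ⟨fun _ => 1, fun _ => Or.inl rfl, by rw [hfe]; simp⟩
    have hTf0 : sInf Tf = 0 := Nat.eq_zero_of_le_zero (Nat.sInf_le h0)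
    rw [hTce, Set.empty_union, hTf0, Nat.sInf_empty]
    simp
  · apply le_antisymm
    · apply le_min
      · exact Nat.sInf_le (Set.mem_union_left _ (Nat.sInf_mem hTcne))
      · exact Nat.sInf_le (Set.mem_union_right _ (Nat.sInf_mem hTfne))
    · rcases Nat.sInf_mem (hTcne.mono Set.subset_union_left) with h | h
      · exact le_trans (min_le_left _ _) (Nat.sInf_le h)
      · exact le_trans (min_le_right _ _) (Nat.sInf_le h)
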